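/- For all natural numbers n and j with j ≥ 1: if n ≥ j then r_{nj} = ∑_{k=0}^{⌊(j−1)/2⌋} (−1)^k · binom(j−1−k, k) · C_{n−1−k}, and if n < j then r_{nj} = 0. (In particular each entry of D(𝔽^S)⁻¹D is an alternating linear combination of Catalan numbers whose coefficients binom(j−1−k,k) sum to the Fibonacci number F_j.) -/

import Mathlib

open PowerSeries Finset

/-- The generating function of the Catalan numbers. -/
noncomputable def catalanGF : PowerSeries ℝ :=
  PowerSeries.mk fun n => (catalan n : ℝ)

/-- `r i j` is the coefficient of `x^i` in `(xC(x))^j`, i.e. the `(i,j)` entry of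
`D(𝔽^S)⁻¹D`. -/
noncomputable def rEntry (i j : ℕ) : ℝ :=
  PowerSeries.coeff i ((PowerSeries.X * catalanGF) ^ j)

lemma catalanGF_eq : catalanGF = 1 + X * catalanGF ^ 2 := by
  ext n
  cases n with
  | zero => simp [catalanGF]
  | succ m =>
    rw [map_add, PowerSeries.coeff_succ_X_mul, sq, PowerSeries.coeff_mul]
    simp only [catalanGF, coeff_mk, PowerSeries.coeff_one, Nat.succ_ne_zero, if_false, zero_add]
    rw [catalan_succ']
    push_cast
    rfl

lemma sq_XC : (X * catalanGF) ^ 2 = X * catalanGF - X := by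
  nth_rewrite 2 [catalanGF_eq]
  ring

lemma rEntry_zero (n j : ℕ) (h : n < j) : rEntry n j = 0 := by
  unfold rEntry
  rw [mul_pow, PowerSeries.coeff_X_pow_mul', if_neg (by omega)]

lemma rEntry_one (m : ℕ) : rEntry (m + 1) 1 = (catalan m : ℝ) := by
  unfold rEntry
  rw [pow_one, PowerSeries.coeff_succ_X_mul]
  simp [catalanGF]

lemma rEntry_two (m : ℕ) : rEntry (m + 2) 2 = (catalan (m + 1) : ℝ) := by
  unfold rEntry
  rw [sq_XC, map_sub]
  rw [show m + 2 = (m + 1) + 1 from rfl, PowerSeries.coeff_succ_X_mul]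
  simp [catalanGF, PowerSeries.coeff_X]

lemma rEntry_rec (n j : ℕ) (hn : 1 ≤ n) :
    rEntry n (j + 2) = rEntry n (j + 1) - rEntry (n - 1) j := by
  have h : (X * catalanGF) ^ (j + 2)
      = (X * catalanGF) ^ (j + 1) - X * (X * catalanGF) ^ j := by
    have h1 : (X * catalanGF) ^ (j + 2) = (X * catalanGF) ^ j * (X * catalanGF) ^ 2 := by ring
    rw [h1, sq_XC]; ring
  unfold rEntry
  rw [h, map_sub]
  congr 1
  obtain ⟨m, rfl⟩ : ∃ m, n = m + 1 := ⟨n - 1, by omega⟩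
  rw [PowerSeries.coeff_succ_X_mul]
  simp

/-- The alternating sum of Catalan numbers appearing in the statement. -/
noncomputable def S (n j : ℕ) : ℝ :=
  ∑ k ∈ Finset.range ((j - 1) / 2 + 1),
    (-1 : ℝ) ^ k * ((j - 1 - k).choose k : ℝ) * (catalan (n - 1 - k) : ℝ)

lemma S_rec (n j : ℕ) : S n (j + 3) = S n (j + 2) - S (n - 1) (j + 1) := by
  unfold S
  have e1 : j + 3 - 1 = j + 2 := by omega
  have e2 : j + 2 - 1 = j + 1 := by omega
  have e3 : j + 1 - 1 = j := by omega
  rw [e1, e2, e3]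
  set m := (j + 2) / 2 with hm
  have key : ∀ k ∈ Finset.range (m + 1),
      (-1 : ℝ) ^ k * ((j + 2 - k).choose k : ℝ) * (catalan (n - 1 - k) : ℝ)
      = (-1 : ℝ) ^ k * ((j + 1 - k).choose k : ℝ) * (catalan (n - 1 - k) : ℝ)
        + (if k = 0 then 0
            else (-1 : ℝ) ^ k * ((j + 1 - k).choose (k - 1) : ℝ) * (catalan (n - 1 - k) : ℝ)) := by
    intro k hk
    rw [Finset.mem_range] at hk
    rcases Nat.eq_zero_or_pos k with rfl | hk1
    · simp
    · rw [if_neg (by omega)]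
      obtain ⟨t, rfl⟩ : ∃ t, k = t + 1 := ⟨k - 1, by omega⟩
      have h1 : j + 2 - (t + 1) = (j - t) + 1 := by omega
      have h2 : j + 1 - (t + 1) = j - t := by omega
      rw [h1, h2, Nat.choose_succ_succ]
      simp only [Nat.add_sub_cancel]
      push_cast
      ring
  rw [Finset.sum_congr rfl key, Finset.sum_add_distrib]
  have first : ∑ k ∈ Finset.range (m + 1),
      (-1 : ℝ) ^ k * ((j + 1 - k).choose k : ℝ) * (catalan (n - 1 - k) : ℝ)
      = ∑ k ∈ Finset.range ((j + 1) / 2 + 1),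
      (-1 : ℝ) ^ k * ((j + 1 - k).choose k : ℝ) * (catalan (n - 1 - k) : ℝ) := by
    refine (Finset.sum_subset (Finset.range_subset_range.mpr (by omega)) ?_).symm
    intro k hk hk'
    rw [Finset.mem_range] at hk
    rw [Finset.mem_range, not_lt] at hk'
    have : (j + 1 - k).choose k = 0 := Nat.choose_eq_zero_of_lt (by omega)
    rw [this]
    push_cast
    ring
  have second : ∑ k ∈ Finset.range (m + 1),
      (if k = 0 then (0 : ℝ)
        else (-1 : ℝ) ^ k * ((j + 1 - k).choose (k - 1) : ℝ) * (catalan (n - 1 - k) : ℝ))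
      = - ∑ k ∈ Finset.range (j / 2 + 1),
        (-1 : ℝ) ^ k * ((j - k).choose k : ℝ) * (catalan (n - 1 - 1 - k) : ℝ) := by
    have hm1 : m + 1 = (j / 2 + 1) + 1 := by omega
    rw [hm1, Finset.sum_range_succ']
    simp only [reduceIte, add_zero]
    rw [← Finset.sum_neg_distrib]
    refine Finset.sum_congr rfl fun k _ => ?_
    rw [if_neg (by omega)]
    have h1 : j + 1 - (k + 1) = j - k := by omega
    have h2 : k + 1 - 1 = k := by omega
    have h3 : n - 1 - (k + 1) = n - 1 - 1 - k := by omega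
    rw [h1, h2, h3, pow_succ]
    ring
  rw [first, second]
  ring

/-- For `j ≥ 1`: if `n ≥ j` then
`r_{nj} = ∑_{k=0}^{⌊(j−1)/2⌋} (−1)^k · binom(j−1−k,k) · C_{n−1−k}`,
and if `n < j` then `r_{nj} = 0`. -/
theorem stmt_9 (n j : ℕ) (hj : 1 ≤ j) :
    (j ≤ n →
      rEntry n j =
        ∑ k ∈ Finset.range ((j - 1) / 2 + 1),
          (-1 : ℝ) ^ k * ((j - 1 - k).choose k : ℝ) * (catalan (n - 1 - k) : ℝ)) ∧
    (n < j → rEntry n j = 0) := by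
  constructor
  · intro hn
    have key : ∀ j, 1 ≤ j → ∀ n, j ≤ n → rEntry n j = S n j := by
      intro j
      induction j using Nat.strong_induction_on with
      | _ j ih =>
        match j with
        | 0 => intro h0; exact absurd h0 (by omega)
        | 1 =>
          intro _ n hn1
          obtain ⟨m, rfl⟩ : ∃ m, n = m + 1 := ⟨n - 1, by omega⟩
          rw [rEntry_one]
          simp [S]
        | 2 =>
          intro _ n hn2
          obtain ⟨m, rfl⟩ : ∃ m, n = m + 2 := ⟨n - 2, by omega⟩
          rw [rEntry_two]
          simp [S]
        | (j + 3) =>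
          intro _ n hn3
          rw [rEntry_rec n (j + 1) (by omega),
            ih (j + 2) (by omega) (by omega) n (by omega),
            ih (j + 1) (by omega) (by omega) (n - 1) (by omega), ← S_rec]
    exact key j hj n hn
  · intro h
    exact rEntry_zero n j h
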